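/- For the triangle-plus-center configuration with central mass m > 0, the three nontrivial double eigenvalues λ₃, λ₄, λ₅ of the Hessian of √(2I)U satisfy the cubic λ³ − f₁(m)λ² + f₂(m)λ − f₃(m) = 0, where f₁(m) = (1/2)(2√3 m² + (9√3+2)m + 5), f₂(m) = (1/2)(18m³ + (11√3 − 18)m² + (15√3+5)m + 3), and f₃(m) = (45/4 − 27√3/2)m³ + (21√3/4 − 27/4)m² + (3/2 + 9√3/4)m. -/

import Mathlib

open Matrix Polynomial

/-- `√3`. -/
noncomputable def s3 : ℝ := Real.sqrt 3

/-- The Hessian `H₂` of `√(2I)·U` at the triangle-plus-center central configuration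
`z₀ = (1,0,-1/2,√3/2,-1/2,-√3/2,0,0)`, with three unit masses and central mass `m`. -/
noncomputable def H2 (m : ℝ) : Matrix (Fin 8) (Fin 8) ℝ :=
  !![5/6+2*s3*m, 0, 1/12+s3*m/2, -s3/4-3*m/2, 1/12+s3*m/2, s3/4+3*m/2, -2*s3*m, 0;
     0, 5/6, s3/4, 1/12, -s3/4, 1/12, 0, s3*m;
     1/12+s3*m/2, s3/4, 5/6+s3*m/2, -3*m/2, 1/12-s3*m/4, -s3/4-3*m/4, s3*m/4, 9*m/4;
     -s3/4-3*m/2, 1/12, -3*m/2, 5/6+3*s3*m/2, s3/4+3*m/4, 1/12+3*s3*m/4, 9*m/4, -5*s3*m/4;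
     1/12+s3*m/2, -s3/4, 1/12-s3*m/4, s3/4+3*m/4, 5/6+s3*m/2, 3*m/2, s3*m/4, -9*m/4;
     s3/4+3*m/2, 1/12, -s3/4-3*m/4, 1/12+3*s3*m/4, 3*m/2, 5/6+3*s3*m/2, -9*m/4, -5*s3*m/4;
     -2*s3*m, 0, s3*m/4, 9*m/4, s3*m/4, -9*m/4, s3*(2*m^2+3*m)/2+m, 0;
     0, s3*m, 9*m/4, -5*s3*m/4, -9*m/4, -5*s3*m/4, 0, s3*(2*m^2+3*m)/2+m]

noncomputable def f₁ (m : ℝ) : ℝ := (1/2)*(2*s3*m^2 + (9*s3+2)*m + 5)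

noncomputable def f₂ (m : ℝ) : ℝ := (1/2)*(18*m^3 + (11*s3-18)*m^2 + (15*s3+5)*m + 3)

noncomputable def f₃ (m : ℝ) : ℝ :=
  (45/4 - 27*s3/2)*m^3 + (21*s3/4 - 27/4)*m^2 + (3/2 + 9*s3/4)*m

/-! ### Auxiliary machinery -/

lemma s3_sq : s3 ^ 2 = 3 := Real.sq_sqrt (by norm_num)

/-- Similar matrices have the same characteristic polynomial. -/
lemma charpoly_similar {n : Type*} [DecidableEq n] [Fintype n] {R : Type*} [CommRing R]
    (M P Q D : Matrix n n R) (hPQ : P * Q = 1) (hMP : M * P = P * D) :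
    M.charpoly = D.charpoly := by
  have hM : M = P * D * Q := by
    calc M = M * (P * Q) := by rw [hPQ, mul_one]
    _ = (M * P) * Q := by rw [mul_assoc]
    _ = P * D * Q := by rw [hMP]
  have hPQ' : (P.map (C : R →+* R[X])) * (Q.map C) = 1 := by
    rw [← Matrix.map_mul, hPQ]; simp
  have key : charmatrix M = (P.map (C : R →+* R[X])) * charmatrix D * (Q.map C) := by
    unfold charmatrix
    rw [Matrix.mul_sub, Matrix.sub_mul]
    congr 1
    · rw [scalar_apply, ← Matrix.smul_one_eq_diagonal, Matrix.mul_smul, Matrix.smul_mul,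
        mul_one, hPQ', Matrix.smul_one_eq_diagonal]
    · simp only [RingHom.mapMatrix_apply]
      rw [hM, Matrix.map_mul, Matrix.map_mul]
  unfold Matrix.charpoly
  rw [key, Matrix.det_mul, Matrix.det_mul]
  have : (P.map (C : R →+* R[X])).det * (Q.map C).det = 1 := by
    rw [← Matrix.det_mul, hPQ', Matrix.det_one]
  calc (P.map (C : R →+* R[X])).det * (charmatrix D).det * (Q.map C).det
      = (charmatrix D).det * ((P.map (C : R →+* R[X])).det * (Q.map C).det) := by ring
    _ = (charmatrix D).det := by rw [this, mul_one]

/-- Evaluating the characteristic polynomial at `x` gives `det (x·1 - M)`. -/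
lemma eval_charpoly {n : Type*} [DecidableEq n] [Fintype n] (M : Matrix n n ℝ) (x : ℝ) :
    (M.charpoly).eval x
      = (Matrix.of (fun i j => (if i = j then x else 0) - M i j) : Matrix n n ℝ).det := by
  rw [Matrix.charpoly, ← Polynomial.coe_evalRingHom, RingHom.map_det]
  congr 1
  ext i j
  by_cases h : i = j <;> simp [h, charmatrix_apply, Matrix.diagonal]

/-- Explicit expansion of a `4 × 4` determinant. -/
theorem det_fin_four {R : Type*} [CommRing R] (A : Matrix (Fin 4) (Fin 4) R) :
    det A = A 0 0*A 1 1*A 2 2*A 3 3 - A 0 0*A 1 1*A 2 3*A 3 2 - A 0 0*A 1 2*A 2 1*A 3 3 + A 0 0*A 1 2*A 2 3*A 3 1 + A 0 0*A 1 3*A 2 1*A 3 2 - A 0 0*A 1 3*A 2 2*A 3 1 - A 0 1*A 1 0*A 2 2*A 3 3 + A 0 1*A 1 0*A 2 3*A 3 2 + A 0 1*A 1 2*A 2 0*A 3 3 - A 0 1*A 1 2*A 2 3*A 3 0 - A 0 1*A 1 3*A 2 0*A 3 2 + A 0 1*A 1 3*A 2 2*A 3 0 + A 0 2*A 1 0*A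 2 1*A 3 3 - A 0 2*A 1 0*A 2 3*A 3 1 - A 0 2*A 1 1*A 2 0*A 3 3 + A 0 2*A 1 1*A 2 3*A 3 0 + A 0 2*A 1 3*A 2 0*A 3 1 - A 0 2*A 1 3*A 2 1*A 3 0 - A 0 3*A 1 0*A 2 1*A 3 2 + A 0 3*A 1 0*A 2 2*A 3 1 + A 0 3*A 1 1*A 2 0*A 3 2 - A 0 3*A 1 1*A 2 2*A 3 0 - A 0 3*A 1 2*A 2 0*A 3 1 + A 0 3*A 1 2*A 2 1*A 3 0 := by
  rw [det_succ_row_zero]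
  norm_num [Fin.sum_univ_succ, det_fin_three, Fin.succAbove,
    show ((1:Fin 3).succ = 2) from rfl, show ((2:Fin 3).succ = 3) from rfl,
    show (Fin.castSucc (2:Fin 3) = 2) from rfl, show (Fin.castSucc (1:Fin 3) = 1) from rfl,
    show ((0:Fin 3).succ = 1) from rfl,
    Fin.le_def]
  simp +decide
  ring

/-! ### The two `4 × 4` blocks

The configuration is symmetric under the reflection `(x, y) ↦ (x, -y)` combined with swapping
bodies `2` and `3`.  Decomposing `ℝ⁸` into the symmetric and antisymmetric subspaces of this
reflection block-diagonalizes `H₂` into the two `4 × 4` blocks `Bp` and `Bm` below. -/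

noncomputable def Bp (m : ℝ) : Matrix (Fin 4) (Fin 4) ℝ :=
  !![5/6+2*s3*m, 1/6+s3*m, -s3/2-3*m, -2*s3*m;
     1/12+s3*m/2, 11/12+s3*m/4, s3/4-3*m/4, s3*m/4;
     -s3/4-3*m/2, s3/4-3*m/4, 3/4+3*s3*m/4, 9*m/4;
     -2*s3*m, s3*m/2, 9*m/2, m+3*s3*m/2+s3*m^2]

noncomputable def Bm (m : ℝ) : Matrix (Fin 4) (Fin 4) ℝ :=
  !![5/6, s3/2, 1/6, s3*m;
     s3/4, 3/4+3*s3*m/4, -s3/4-9*m/4, 9*m/4;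
     1/12, -s3/4-9*m/4, 11/12+9*s3*m/4, -5*s3*m/4;
     s3*m, 9*m/2, -5*s3*m/2, m+3*s3*m/2+s3*m^2]

noncomputable def D8 (m : ℝ) : Matrix (Fin 8) (Fin 8) ℝ :=
  !![5/6+2*s3*m, 1/6+s3*m, -s3/2-3*m, -2*s3*m, 0, 0, 0, 0;
     1/12+s3*m/2, 11/12+s3*m/4, s3/4-3*m/4, s3*m/4, 0, 0, 0, 0;
     -s3/4-3*m/2, s3/4-3*m/4, 3/4+3*s3*m/4, 9*m/4, 0, 0, 0, 0;
     -2*s3*m, s3*m/2, 9*m/2, m+3*s3*m/2+s3*m^2, 0, 0, 0, 0;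
     0, 0, 0, 0, 5/6, s3/2, 1/6, s3*m;
     0, 0, 0, 0, s3/4, 3/4+3*s3*m/4, -s3/4-9*m/4, 9*m/4;
     0, 0, 0, 0, 1/12, -s3/4-9*m/4, 11/12+9*s3*m/4, -5*s3*m/4;
     0, 0, 0, 0, s3*m, 9*m/2, -5*s3*m/2, m+3*s3*m/2+s3*m^2]

def Pm8 : Matrix (Fin 8) (Fin 8) ℝ :=
  !![1, 0, 0, 0, 0, 0, 0, 0;
     0, 0, 0, 0, 1, 0, 0, 0;
     0, 1, 0, 0, 0, 1, 0, 0;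
     0, 0, 1, 0, 0, 0, 1, 0;
     0, 1, 0, 0, 0, -1, 0, 0;
     0, 0, -1, 0, 0, 0, 1, 0;
     0, 0, 0, 1, 0, 0, 0, 0;
     0, 0, 0, 0, 0, 0, 0, 1]

noncomputable def Qm8 : Matrix (Fin 8) (Fin 8) ℝ :=
  !![1, 0, 0, 0, 0, 0, 0, 0;
     0, 0, 1/2, 0, 1/2, 0, 0, 0;
     0, 0, 0, 1/2, 0, -1/2, 0, 0;
     0, 0, 0, 0, 0, 0, 1, 0;
     0, 1, 0, 0, 0, 0, 0, 0;
     0, 0, 1/2, 0, -1/2, 0, 0, 0;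
     0, 0, 0, 1/2, 0, 1/2, 0, 0;
     0, 0, 0, 0, 0, 0, 0, 1]

set_option maxHeartbeats 1000000 in
lemma hPQ : Pm8 * Qm8 = 1 := by
  ext i j
  fin_cases i <;> fin_cases j <;>
    norm_num [Pm8, Qm8, Matrix.mul_apply, Fin.sum_univ_succ, Matrix.one_apply, Fin.ext_iff]

set_option maxHeartbeats 1600000 in
lemma hMP (m : ℝ) : H2 m * Pm8 = Pm8 * D8 m := by
  ext i j
  fin_cases i <;> fin_cases j <;>
    norm_num [H2, Pm8, D8, Matrix.mul_apply, Fin.sum_univ_succ] <;> ring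

lemma hD8 (m : ℝ) :
    D8 m = Matrix.reindex finSumFinEquiv finSumFinEquiv (Matrix.fromBlocks (Bp m) 0 0 (Bm m)) := by
  ext i j
  fin_cases i <;> fin_cases j <;> rfl

set_option maxHeartbeats 1000000 in
lemma charpoly_Bp (m : ℝ) :
    (Bp m).charpoly = X * (X ^ 3 - C (f₁ m) * X ^ 2 + C (f₂ m) * X - C (f₃ m)) := by
  apply Polynomial.funext
  intro x
  rw [_root_.eval_charpoly]
  have h : (Matrix.of (fun i j => (if i = j then x else 0) - Bp m i j) : Matrix (Fin 4) (Fin 4) ℝ)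
      = !![x-(5/6+2*s3*m), -(1/6+s3*m), -(-s3/2-3*m), -(-2*s3*m);
           -(1/12+s3*m/2), x-(11/12+s3*m/4), -(s3/4-3*m/4), -(s3*m/4);
           -(-s3/4-3*m/2), -(s3/4-3*m/4), x-(3/4+3*s3*m/4), -(9*m/4);
           -(-2*s3*m), -(s3*m/2), -(9*m/2), x-(m+3*s3*m/2+s3*m^2)] := by
    ext i j
    fin_cases i <;> fin_cases j <;> simp [Bp]
  rw [h, det_fin_four]
  norm_num [Matrix.cons_val_zero, Matrix.cons_val_one, Matrix.cons_val_two, Matrix.cons_val_three,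
    Matrix.vecHead, Matrix.vecTail]
  simp only [f₁, f₂, f₃, eval_mul, eval_add, eval_sub, eval_pow, eval_X, eval_C]
  linear_combination ((3/16)*x + (-3/16)*x^2 + (-3/16)*m + (3/16)*m*x + (81/32)*m^2 + (-81/16)*m^2*x + (33/16)*m^2*x^2 + (45/32)*m^3 + (-87/16)*m^3*x + (3)*m^3*x^2 + (-9/32)*s3*m + (9/16)*s3*m*x + (-15/32)*s3*m^2 + (3/16)*s3*m^2*x + (27/32)*s3*m^3 + (45/16)*s3*m^3*x + (45/32)*s3*m^4 + (-27/16)*s3*m^4*x + (-9/32)*s3^2*m^2 + (-9/32)*s3^2*m^3 + (-27/16)*s3^2*m^4) * s3_sq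

set_option maxHeartbeats 1000000 in
lemma charpoly_Bm (m : ℝ) :
    (Bm m).charpoly = X * (X ^ 3 - C (f₁ m) * X ^ 2 + C (f₂ m) * X - C (f₃ m)) := by
  apply Polynomial.funext
  intro x
  rw [_root_.eval_charpoly]
  have h : (Matrix.of (fun i j => (if i = j then x else 0) - Bm m i j) : Matrix (Fin 4) (Fin 4) ℝ)
      = !![x-(5/6), -(s3/2), -(1/6), -(s3*m);
           -(s3/4), x-(3/4+3*s3*m/4), -(-s3/4-9*m/4), -(9*m/4);
           -(1/12), -(-s3/4-9*m/4), x-(11/12+9*s3*m/4), -(-5*s3*m/4);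
           -(s3*m), -(9*m/2), -(-5*s3*m/2), x-(m+3*s3*m/2+s3*m^2)] := by
    ext i j
    fin_cases i <;> fin_cases j <;> simp [Bm]
  rw [h, det_fin_four]
  norm_num [Matrix.cons_val_zero, Matrix.cons_val_one, Matrix.cons_val_two, Matrix.cons_val_three,
    Matrix.vecHead, Matrix.vecTail]
  simp only [f₁, f₂, f₃, eval_mul, eval_add, eval_sub, eval_pow, eval_X, eval_C]
  linear_combination ((3/16)*x + (-3/16)*x^2 + (-3/16)*m + (3/16)*m*x + (81/32)*m^2 + (-81/16)*m^2*x + (33/16)*m^2*x^2 + (45/32)*m^3 + (-87/16)*m^3*x + (3)*m^3*x^2 + (-9/32)*s3*m + (9/16)*s3*m*x + (-15/32)*s3*m^2 + (3/16)*s3*m^2*x + (27/32)*s3*m^3 + (45/16)*s3*m^3*x + (45/32)*s3*m^4 + (-27/16)*s3*m^4*x + (-9/32)*s3^2*m^2 + (-9/32)*s3^2*m^3 + (-27/16)*s3^2*m^4) * s3_sq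

/-- For the triangle-plus-center configuration with central mass `m > 0`, the Hessian `H₂`
has eigenvalue `0` with multiplicity 2, and its three nontrivial double eigenvalues
`λ₃, λ₄, λ₅` are the roots of the cubic `λ³ - f₁(m) λ² + f₂(m) λ - f₃(m) = 0`:
the characteristic polynomial of `H₂` is `X² · (X³ - f₁(m) X² + f₂(m) X - f₃(m))²`. -/
theorem H2_eigenvalues_satisfy_cubic (m : ℝ) (hm : 0 < m) :
    (H2 m).charpoly =
      X ^ 2 * (X ^ 3 - C (f₁ m) * X ^ 2 + C (f₂ m) * X - C (f₃ m)) ^ 2 := by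
  have h1 : (H2 m).charpoly = (D8 m).charpoly :=
    charpoly_similar (H2 m) Pm8 Qm8 (D8 m) hPQ (hMP m)
  rw [h1, hD8, Matrix.charpoly_reindex, Matrix.charpoly_fromBlocks_zero₁₂,
    charpoly_Bp, charpoly_Bm]
  ring
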